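/- Assume: (S1) κ is a cardinal with cf(κ) > ω; (S2) 𝒯 = (T,⪯) is a well-founded partially ordered set with |T| ≤ κ; (S3) X is a topological space with |X| = κ; (S4) {X_t : t ∈ T} is a partition of X into pieces each of cardinality κ; and (S6) for all s ≺ t in T and every S ⊆ X_t with |S| = κ there is R ⊆ S with |R| < cf(κ) such that the closure of R meets X_s in a set of cardinality κ. Then every left-separating well-ordering of X has order type at least κ·(rk(𝒯)∸1); in particular, if X is left-separated then ord_ℓ(X) ≥ κ·(rk(𝒯)∸1). -/

import Mathlib

universe u

open Cardinal Ordinal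

/-- `o` is the order type of some left-separating well-ordering of `X`:
a well-ordering all of whose initial segments are closed. -/
def IsLeftSepType (X : Type u) [TopologicalSpace X] (o : Ordinal.{u}) : Prop :=
  ∃ (r : X → X → Prop) (hwo : IsWellOrder X r),
    (∀ x : X, IsClosed {y | r y x}) ∧ o = @Ordinal.type X r hwo

/-- A space is left-separated if it admits a left-separating well-ordering. -/
def IsLeftSeparated (X : Type u) [TopologicalSpace X] : Prop :=
  ∃ o, IsLeftSepType X o

/-- The left-separating type of a space: the minimum of the order types of its
left-separating well-orderings. -/
noncomputable def ordL (X : Type u) [TopologicalSpace X] : Ordinal.{u} :=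
  sInf {o | IsLeftSepType X o}

/-- The rank of a well-founded partial order: `rk(𝒯) = sup { rk_𝒯(t) + 1 : t ∈ T }`,
where `rk_𝒯` is the usual well-founded rank function. -/
noncomputable def pordRank (T : Type u) [PartialOrder T] [WellFoundedLT T] : Ordinal.{u} :=
  ⨆ t : T, IsWellFounded.rank (α := T) (· < ·) t + 1

theorem aux_bound (κ : Cardinal.{0}) (hcf : Cardinal.aleph0 < κ.ord.cof)
    (T : Type) [PartialOrder T] [WellFoundedLT T]
    (X : Type) [TopologicalSpace X]
    (P : T → Set X)
    (hsize : ∀ t, #↥(P t) = κ)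
    (hS6 : ∀ s t : T, s < t → ∀ S ⊆ P t, #↥S = κ →
      ∃ R ⊆ S, #↥R < κ.ord.cof ∧ #↥(closure R ∩ P s) = κ)
    (r : X → X → Prop) [hwo : IsWellOrder X r]
    (hcl : ∀ x : X, IsClosed {y | r y x}) :
    ∀ t : T, κ.ord * IsWellFounded.rank (α := T) (· < ·) t ≤ Ordinal.type r := by
  have hκω : ℵ₀ ≤ κ := (hcf.trans_le (Ordinal.cof_ord_le κ)).le
  have hκ1 : (1 : Cardinal) < κ := Cardinal.one_lt_aleph0.trans_le hκω
  set cut : T → Ordinal.{0} → Set X :=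
    fun t δ => {x | x ∈ P t ∧ Ordinal.typein r x < δ} with hcutdef
  set m : T → Ordinal.{0} := fun t => sInf {δ | κ ≤ #↥(cut t δ)} with hmdef
  have hcutP : ∀ t, cut t (Ordinal.type r) = P t := by
    intro t; ext x; simp [hcutdef, Ordinal.typein_lt_type]
  have hmemt : ∀ t, Ordinal.type r ∈ {δ | κ ≤ #↥(cut t δ)} := by
    intro t
    simp only [Set.mem_setOf_eq, hcutP t, hsize t, le_refl]
  have hmle : ∀ t, m t ≤ Ordinal.type r := fun t => csInf_le (OrderBot.bddBelow _) (hmemt t)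
  have hmmem : ∀ t, κ ≤ #↥(cut t (m t)) := fun t => csInf_mem ⟨_, hmemt t⟩
  have hcutsub : ∀ t, cut t (m t) ⊆ P t := fun t x hx => hx.1
  have hmeq : ∀ t, #↥(cut t (m t)) = κ := fun t =>
    le_antisymm ((Cardinal.mk_le_mk_of_subset (hcutsub t)).trans (hsize t).le) (hmmem t)
  have hsmall : ∀ t δ, δ < m t → #↥(cut t δ) < κ := by
    intro t δ hδ
    by_contra h
    exact hδ.not_ge (csInf_le (OrderBot.bddBelow _) (not_lt.1 h))
  have key : ∀ t, (∀ s, s < t → κ.ord * IsWellFounded.rank (α := T) (· < ·) s ≤ m s) →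
      ∀ s, s < t → κ.ord * (IsWellFounded.rank (α := T) (· < ·) s + 1) ≤ m t := by
    intro t IH s hst
    obtain ⟨R, hRS, hRcard, hRcl⟩ := hS6 s t hst (cut t (m t)) (hcutsub t) (hmeq t)
    have hRne : Nonempty ↥R := by
      rcases R.eq_empty_or_nonempty with h | h
      · exfalso
        rw [h, closure_empty, Set.empty_inter, Cardinal.mk_emptyCollection] at hRcl
        exact absurd hRcl.symm (Cardinal.aleph0_pos.trans_le hκω).ne'
      · exact h.to_subtype
    set γ : Ordinal.{0} := ⨆ x : ↥R, Ordinal.typein r ↑x + 1 with hγdef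
    have hγm : γ < m t := by
      by_contra hle
      push_neg at hle
      have hsub : cut t (m t) ⊆ ⋃ x : ↥R, cut t (Ordinal.typein r ↑x + 1) := by
        intro z hz
        have hz2 : Ordinal.typein r z < γ := lt_of_lt_of_le hz.2 hle
        rw [hγdef, Ordinal.lt_iSup_iff] at hz2
        obtain ⟨x, hx⟩ := hz2
        exact Set.mem_iUnion.2 ⟨x, hz.1, hx⟩
      have hb : ∀ x : ↥R, #↥(cut t (Ordinal.typein r ↑x + 1)) < κ := by
        intro x
        have hx1 : Ordinal.typein r ↑x < m t := (hRS x.2).2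
        have hs2 : cut t (Ordinal.typein r ↑x + 1) ⊆ cut t (Ordinal.typein r ↑x) ∪ {(↑x : X)} := by
          intro z hz
          have hz2 : Ordinal.typein r z ≤ Ordinal.typein r ↑x := by
            have := hz.2
            rwa [Ordinal.add_one_eq_succ, Order.lt_succ_iff] at this
          rcases hz2.lt_or_eq with h | h
          · exact Or.inl ⟨hz.1, h⟩
          · exact Or.inr (by simp [Ordinal.typein_injective r h])
        calc #↥(cut t (Ordinal.typein r ↑x + 1))
            ≤ #↥(cut t (Ordinal.typein r ↑x) ∪ {(↑x : X)}) := Cardinal.mk_le_mk_of_subset hs2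
          _ ≤ #↥(cut t (Ordinal.typein r ↑x)) + #↥({(↑x : X)} : Set X) :=
              Cardinal.mk_union_le _ _
          _ = #↥(cut t (Ordinal.typein r ↑x)) + 1 := by rw [Cardinal.mk_singleton]
          _ < κ := Cardinal.add_lt_of_lt hκω (hsmall t _ hx1) hκ1
      have hunion : #↥(⋃ x : ↥R, cut t (Ordinal.typein r ↑x + 1)) < κ := by
        refine lt_of_le_of_lt (Cardinal.mk_iUnion_le _) ?_
        exact Cardinal.mul_lt_of_lt hκω (hRcard.trans_le (Ordinal.cof_ord_le κ))
          (Ordinal.iSup_lt hRcard hb)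
      exact absurd ((hmmem t).trans (Cardinal.mk_le_mk_of_subset hsub)) hunion.not_ge
    have hγtype : γ < Ordinal.type r := hγm.trans_le (hmle t)
    have hclosub : closure R ⊆ {y | Ordinal.typein r y < γ} := by
      have e1 : {y | r y (Ordinal.enum r ⟨γ, hγtype⟩)} = {y | Ordinal.typein r y < γ} := by
        ext y
        rw [Set.mem_setOf_eq, Set.mem_setOf_eq, ← Ordinal.typein_lt_typein r,
          Ordinal.typein_enum]
      rw [← e1]
      refine closure_minimal ?_ (hcl _)
      rw [e1]
      intro y hy
      show Ordinal.typein r y < γ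
      refine lt_of_lt_of_le ?_ (le_ciSup (Ordinal.bddAbove_range _) (⟨y, hy⟩ : ↥R))
      rw [Ordinal.add_one_eq_succ]
      exact Order.lt_succ _
    have hms : m s ≤ γ := by
      refine csInf_le (OrderBot.bddBelow _) ?_
      show κ ≤ #↥(cut s γ)
      rw [← hRcl]
      refine Cardinal.mk_le_mk_of_subset ?_
      rintro z ⟨hz1, hz2⟩
      exact ⟨hz2, hclosub hz1⟩
    have hA : κ ≤ #↥(cut t (m t) \ cut t γ) := by
      by_contra hAlt
      push_neg at hAlt
      have hsub : cut t (m t) ⊆ (cut t (m t) \ cut t γ) ∪ cut t γ := by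
        intro z hz
        by_cases h : z ∈ cut t γ
        · exact Or.inr h
        · exact Or.inl ⟨hz, h⟩
      have hlt : #↥(cut t (m t)) < κ :=
        lt_of_le_of_lt ((Cardinal.mk_le_mk_of_subset hsub).trans (Cardinal.mk_union_le _ _))
          (Cardinal.add_lt_of_lt hκω hAlt (hsmall t γ hγm))
      exact absurd (hmmem t) hlt.not_ge
    have hstep : γ + κ.ord ≤ m t := by
      by_contra hlt2
      push_neg at hlt2
      have hδ0 : m t - γ < κ.ord := by
        by_contra h
        push_neg at h
        refine absurd ?_ hlt2.not_ge
        calc γ + κ.ord ≤ γ + (m t - γ) := add_le_add_right h γ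
          _ = m t := Ordinal.add_sub_cancel_of_le hγm.le
      have hinj : ∀ x : ↥(cut t (m t) \ cut t γ),
          γ ≤ Ordinal.typein r ↑x ∧ Ordinal.typein r ↑x - γ < m t - γ := by
        intro x
        obtain ⟨hx1, hx2⟩ := x.2
        have hγx : γ ≤ Ordinal.typein r ↑x := by
          by_contra hc
          push_neg at hc
          exact hx2 ⟨hx1.1, hc⟩
        refine ⟨hγx, ?_⟩
        rw [← add_lt_add_iff_left γ, Ordinal.add_sub_cancel_of_le hγx,
          Ordinal.add_sub_cancel_of_le hγm.le]
        exact hx1.2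
      have hemb : Function.Injective (fun x : ↥(cut t (m t) \ cut t γ) =>
          (⟨Ordinal.typein r ↑x - γ, (hinj x).2⟩ : Set.Iio (m t - γ))) := by
        intro x y hxy
        have h1 : Ordinal.typein r (↑x : X) - γ = Ordinal.typein r ↑y - γ :=
          congrArg Subtype.val hxy
        have h2 : Ordinal.typein r (↑x : X) = Ordinal.typein r ↑y := by
          rw [← Ordinal.add_sub_cancel_of_le (hinj x).1,
            ← Ordinal.add_sub_cancel_of_le (hinj y).1, h1]
        exact Subtype.ext (Ordinal.typein_injective r h2)
      have hcard : #↥(cut t (m t) \ cut t γ) ≤ (m t - γ).card := by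
        have h1 := Cardinal.lift_mk_le'.mpr ⟨⟨_, hemb⟩⟩
        rw [Ordinal.mk_Iio_ordinal, Cardinal.lift_id'] at h1
        exact Cardinal.lift_le.1 h1
      exact absurd hA ((hcard.trans_lt (Cardinal.lt_ord.1 hδ0)).not_ge)
    calc κ.ord * (IsWellFounded.rank (α := T) (· < ·) s + 1)
        = κ.ord * IsWellFounded.rank (α := T) (· < ·) s + κ.ord := by
          rw [Ordinal.add_one_eq_succ, Ordinal.mul_succ]
      _ ≤ m s + κ.ord := add_le_add_left (IH s hst) _
      _ ≤ γ + κ.ord := add_le_add_left hms _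
      _ ≤ m t := hstep
  have claim : ∀ t : T, κ.ord * IsWellFounded.rank (α := T) (· < ·) t ≤ m t := by
    intro t
    refine WellFoundedLT.induction
      (motive := fun t => κ.ord * IsWellFounded.rank (α := T) (· < ·) t ≤ m t) t ?_
    intro t IH
    have keyt := key t IH
    rcases Ordinal.zero_or_succ_or_isSuccLimit (IsWellFounded.rank (α := T) (· < ·) t) with
      h0 | ⟨β, hβ⟩ | hlim
    · rw [h0, mul_zero]
      exact zero_le
    · have hex : ∃ s : {s : T // s < t}, β ≤ IsWellFounded.rank (α := T) (· < ·) ↑s := by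
        by_contra hc
        push_neg at hc
        have h2 : IsWellFounded.rank (α := T) (· < ·) t ≤ β := by
          rw [IsWellFounded.rank_eq]
          refine Ordinal.iSup_le_iff.2 ?_
          intro b
          rw [Order.succ_le_iff]
          exact hc b
        rw [← hβ] at h2
        exact (Order.lt_succ β).not_ge h2
      obtain ⟨⟨s, hs⟩, hsβ⟩ := hex
      rw [← hβ, ← Ordinal.add_one_eq_succ]
      calc κ.ord * (β + 1) ≤ κ.ord * (IsWellFounded.rank (α := T) (· < ·) s + 1) :=
            mul_le_mul_right (add_le_add_left hsβ 1) _
        _ ≤ m t := keyt s hs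
    · refine (Ordinal.mul_le_iff_of_isSuccLimit hlim).2 ?_
      intro β' hβ'
      rw [IsWellFounded.rank_eq, Ordinal.lt_iSup_iff] at hβ'
      obtain ⟨⟨s, hs⟩, hβ's⟩ := hβ'
      have hle : β' ≤ IsWellFounded.rank (α := T) (· < ·) s := Order.lt_succ_iff.1 hβ's
      calc κ.ord * β' ≤ κ.ord * (IsWellFounded.rank (α := T) (· < ·) s + 1) :=
            mul_le_mul_right (hle.trans (by rw [Ordinal.add_one_eq_succ]; exact Order.le_succ _)) _
        _ ≤ m t := keyt s hs
  exact fun t => (claim t).trans (hmle t)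

theorem stmt_7 (κ : Cardinal.{0}) (hcf : Cardinal.aleph0 < κ.ord.cof)
    (T : Type) [PartialOrder T] [WellFoundedLT T] (hT : #T ≤ κ)
    (X : Type) [TopologicalSpace X] (hX : #X = κ)
    (P : T → Set X)
    (hdisj : ∀ s t : T, s ≠ t → Disjoint (P s) (P t))
    (hcov : (⋃ t, P t) = Set.univ)
    (hsize : ∀ t, #↥(P t) = κ)
    (hS6 : ∀ s t : T, s < t → ∀ S ⊆ P t, #↥S = κ →
      ∃ R ⊆ S, #↥R < κ.ord.cof ∧ #↥(closure R ∩ P s) = κ) :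
    (∀ (r : X → X → Prop) (hwo : IsWellOrder X r),
        (∀ x : X, IsClosed {y | r y x}) →
        κ.ord * (pordRank T).pred ≤ @Ordinal.type X r hwo) ∧
    (IsLeftSeparated X → κ.ord * (pordRank T).pred ≤ ordL X) := by
  have hκω : ℵ₀ ≤ κ := (hcf.trans_le (Ordinal.cof_ord_le κ)).le
  have main : ∀ (r : X → X → Prop) (hwo : IsWellOrder X r),
      (∀ x : X, IsClosed {y | r y x}) → κ.ord * (pordRank T).pred ≤ @Ordinal.type X r hwo := by
    intro r hwo hcl
    letI := hwo
    have aux := aux_bound κ hcf T X P hsize hS6 r hcl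
    have hxX : Nonempty X := by
      rw [← Cardinal.mk_ne_zero_iff, hX]
      exact (Cardinal.aleph0_pos.trans_le hκω).ne'
    obtain ⟨x⟩ := hxX
    have hx : x ∈ ⋃ t, P t := by rw [hcov]; exact Set.mem_univ x
    obtain ⟨t0, ht0⟩ := Set.mem_iUnion.1 hx
    rcases Ordinal.zero_or_succ_or_isSuccLimit (pordRank T) with h0 | ⟨β, hβ⟩ | hlim
    · exfalso
      have h1 : IsWellFounded.rank (α := T) (· < ·) t0 + 1 ≤ pordRank T :=
        le_ciSup (Ordinal.bddAbove_range _) t0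
      rw [h0] at h1
      exact absurd h1 (by rw [Ordinal.add_one_eq_succ]; exact (Ordinal.succ_pos _).not_ge)
    · rw [← hβ, Ordinal.pred_succ]
      have hex : ∃ t : T, β ≤ IsWellFounded.rank (α := T) (· < ·) t := by
        by_contra hc
        push_neg at hc
        have h2 : pordRank T ≤ β := by
          refine Ordinal.iSup_le_iff.2 ?_
          intro t
          rw [Ordinal.add_one_eq_succ, Order.succ_le_iff]
          exact hc t
        rw [← hβ] at h2
        exact (Order.lt_succ β).not_ge h2
      obtain ⟨t, ht⟩ := hex
      exact (mul_le_mul_right ht _).trans (aux t)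
    · rw [Ordinal.pred_eq_iff_isSuccPrelimit.2 hlim.isSuccPrelimit]
      refine (Ordinal.mul_le_iff_of_isSuccLimit hlim).2 ?_
      intro β' hβ'
      have hβ'2 : β' < ⨆ t : T, IsWellFounded.rank (α := T) (· < ·) t + 1 := hβ'
      rw [Ordinal.lt_iSup_iff] at hβ'2
      obtain ⟨t, ht⟩ := hβ'2
      have hle : β' ≤ IsWellFounded.rank (α := T) (· < ·) t := by
        rw [Ordinal.add_one_eq_succ] at ht
        exact Order.lt_succ_iff.1 ht
      exact (mul_le_mul_right hle _).trans (aux t)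
  refine ⟨main, ?_⟩
  rintro ⟨o, ho⟩
  refine le_csInf ⟨o, ho⟩ ?_
  rintro o' ⟨r, hwo, hcl, rfl⟩
  exact main r hwo hcl
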